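/- For every real X > 0 and every real Y with k - 1/2 ≤ Y ≤ k for some integer k, the sum ∑_{n ∈ ℤ} (n - Y) · exp(-π(n - Y)²/X) is nonnegative. -/

import Mathlib

set_option maxHeartbeats 1000000

open Real

/-- `|sin (n θ)| ≤ n sin θ` for `θ ∈ [0, π]`. -/
lemma aux_sin (θ : ℝ) (h0 : 0 ≤ θ) (h1 : θ ≤ π) :
    ∀ n : ℕ, |Real.sin (n * θ)| ≤ n * Real.sin θ := by
  have hs : 0 ≤ Real.sin θ := Real.sin_nonneg_of_nonneg_of_le_pi h0 h1
  intro n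
  induction n with
  | zero => simp
  | succ n ih =>
    have harg : ((n + 1 : ℕ) : ℝ) * θ = n * θ + θ := by push_cast; ring
    rw [harg, Real.sin_add]
    calc |Real.sin (n * θ) * Real.cos θ + Real.cos (n * θ) * Real.sin θ|
        ≤ |Real.sin (n * θ) * Real.cos θ| + |Real.cos (n * θ) * Real.sin θ| := abs_add_le _ _
      _ ≤ |Real.sin (n * θ)| * 1 + 1 * Real.sin θ := by
          rw [abs_mul, abs_mul]
          have e1 : |Real.sin (n * θ)| * |Real.cos θ| ≤ |Real.sin (n * θ)| * 1 :=
            mul_le_mul_of_nonneg_left (Real.abs_cos_le_one θ) (abs_nonneg _)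
          have e2 : |Real.cos (n * θ)| * |Real.sin θ| ≤ 1 * Real.sin θ := by
            rw [abs_of_nonneg hs]
            exact mul_le_mul_of_nonneg_right (Real.abs_cos_le_one _) hs
          linarith
      _ ≤ n * Real.sin θ + 1 * Real.sin θ := by nlinarith
      _ = (n + 1 : ℕ) * Real.sin θ := by push_cast; ring

lemma aux_exp3 : (20 : ℝ) ≤ Real.exp 3 := by
  have h := Real.exp_one_gt_d9
  have h3 : Real.exp 3 = Real.exp 1 ^ 3 := by
    rw [← Real.exp_nat_mul]; norm_num
  have h4 : (2.7182818283 : ℝ) ^ 3 ≤ Real.exp 1 ^ 3 :=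
    pow_le_pow_left₀ (by norm_num) h.le 3
  rw [h3]; nlinarith

lemma aux_exp_big : 50 * π ≤ Real.exp (5 * π / 2 - 2) := by
  have hπu := Real.pi_lt_d2
  have hπl := Real.pi_gt_d6
  have h1 : Real.exp (23 / 4 : ℝ) ≤ Real.exp (5 * π / 2 - 2) :=
    Real.exp_le_exp.2 (by nlinarith)
  have h2 : Real.exp (23 / 4 : ℝ) = Real.exp 1 ^ 5 * Real.exp (3 / 4) := by
    rw [← Real.exp_nat_mul, ← Real.exp_add]; norm_num
  have h3 : (2.7182818283 : ℝ) ^ 5 ≤ Real.exp 1 ^ 5 :=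
    pow_le_pow_left₀ (by norm_num) Real.exp_one_gt_d9.le 5
  have h4 : (1 + 3 / 4 : ℝ) ≤ Real.exp (3 / 4) := by
    have := Real.add_one_le_exp (3 / 4 : ℝ); linarith
  have h5 : (148 : ℝ) ≤ Real.exp 1 ^ 5 := by nlinarith
  have h6 : (148 * (1 + 3 / 4) : ℝ) ≤ Real.exp 1 ^ 5 * Real.exp (3 / 4) := by
    have h7 : (0:ℝ) < Real.exp 1 ^ 5 := by positivity
    nlinarith
  nlinarith

/-- `x e^{-πx}` is small for `x ≥ 5/2`. -/
lemma aux_xexp (x : ℝ) (hx : 5 / 2 ≤ x) :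
    x * Real.exp (-(π * x)) ≤ 5 / 2 * Real.exp (-(5 * π / 2)) := by
  have hπ := Real.pi_gt_three
  have h1 : x ≤ 5 / 2 * Real.exp (π * x - 5 * π / 2) := by
    have h2 : π * (x - 5 / 2) + 1 ≤ Real.exp (π * (x - 5 / 2)) :=
      Real.add_one_le_exp _
    have h3 : x ≤ 5 / 2 * (π * (x - 5 / 2) + 1) := by nlinarith
    have h4 : Real.exp (π * (x - 5/2)) = Real.exp (π * x - 5 * π / 2) := by ring_nf
    nlinarith [Real.exp_pos (π * (x - 5 / 2))]
  calc x * Real.exp (-(π * x))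
      ≤ (5 / 2 * Real.exp (π * x - 5 * π / 2)) * Real.exp (-(π * x)) := by
        have := Real.exp_pos (-(π * x)); nlinarith
    _ = 5 / 2 * Real.exp (-(5 * π / 2)) := by
        rw [mul_assoc, ← Real.exp_add]; ring_nf

lemma aux_sq_le (n : ℕ) : ((n : ℝ)) ^ 2 ≤ 4 ^ n := by
  have h : (n : ℝ) ≤ 2 ^ n := by exact_mod_cast (Nat.lt_two_pow_self (n := n)).le
  have h2 : ((n : ℝ)) ^ 2 ≤ ((2 : ℝ) ^ n) ^ 2 :=
    pow_le_pow_left₀ (Nat.cast_nonneg n) h 2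
  calc ((n : ℝ)) ^ 2 ≤ ((2 : ℝ) ^ n) ^ 2 := h2
    _ = 4 ^ n := by rw [← pow_mul, mul_comm, pow_mul]; norm_num

/-- Monotonicity of `y ↦ y e^{-π y² x}` between paired points. -/
lemma gauss_pair (a b x : ℝ) (ha : 0 < a) (hab : a ≤ b) (hx : 0 < x)
    (h : 1 ≤ π * (b + a) * x * a) :
    b * Real.exp (-π * b ^ 2 * x) ≤ a * Real.exp (-π * a ^ 2 * x) := by
  have key : b ≤ a * Real.exp (π * (b ^ 2 - a ^ 2) * x) := by
    have h1 : π * (b ^ 2 - a ^ 2) * x + 1 ≤ Real.exp (π * (b ^ 2 - a ^ 2) * x) :=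
      Real.add_one_le_exp _
    have h2 : b ≤ a * (π * (b ^ 2 - a ^ 2) * x + 1) := by nlinarith
    nlinarith [Real.exp_pos (π * (b ^ 2 - a ^ 2) * x)]
  calc b * Real.exp (-π * b ^ 2 * x)
      ≤ (a * Real.exp (π * (b ^ 2 - a ^ 2) * x)) * Real.exp (-π * b ^ 2 * x) := by
        have := Real.exp_pos (-π * b ^ 2 * x); nlinarith
    _ = a * Real.exp (-π * a ^ 2 * x) := by
        rw [mul_assoc, ← Real.exp_add]; ring_nf


/-- Core estimate for the small-`X` regime, tiny-`t` case: the loss from pairing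
`n` with `-n` is at most `4πtx n² e^{-π(n-t)²x}`. -/
lemma pair_bound (N t x : ℝ) (hN : 1 ≤ N) (ht0 : 0 ≤ t) (ht : t ≤ 1) (hx : 0 < x) :
    (N - t) * Real.exp (-π * (N - t) ^ 2 * x) - (N + t) * Real.exp (-π * (N + t) ^ 2 * x)
      ≤ 4 * π * t * x * N ^ 2 * Real.exp (-π * (N - t) ^ 2 * x) := by
  have hπ := Real.pi_gt_three
  set A := Real.exp (-π * (N - t) ^ 2 * x) with hA
  set u := 4 * π * N * t * x with hu
  have hu0 : 0 ≤ u := by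
    rw [hu]
    have h2 := mul_nonneg (mul_nonneg (mul_nonneg
      (by linarith : (0:ℝ) ≤ 4 * π) (by linarith : (0:ℝ) ≤ N)) ht0) hx.le
    linarith [h2]
  have hB : Real.exp (-π * (N + t) ^ 2 * x) = A * Real.exp (-u) := by
    rw [hA, ← Real.exp_add]; congr 1; rw [hu]; ring
  have hA0 : 0 < A := Real.exp_pos _
  have hE0 : 0 < Real.exp (-u) := Real.exp_pos _
  have hexp : 1 - Real.exp (-u) ≤ u := by
    have := Real.add_one_le_exp (-u); linarith
  have step1 : (N - t) * A - (N + t) * (A * Real.exp (-u))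
      ≤ (N - t) * A - (N - t) * (A * Real.exp (-u)) := by
    have h3 : (0:ℝ) ≤ t * (A * Real.exp (-u)) :=
      mul_nonneg ht0 (mul_nonneg hA0.le hE0.le)
    nlinarith [h3]
  have step3 : (N - t) * A * (1 - Real.exp (-u)) ≤ (N - t) * A * u := by
    apply mul_le_mul_of_nonneg_left hexp
    nlinarith
  have step4 : (N - t) * A * u ≤ 4 * π * t * x * N ^ 2 * A := by
    rw [hu]
    have h1 : (0:ℝ) ≤ 4 * π * t * x * A * (N * t) := by
      have : (0:ℝ) ≤ π := by linarith
      have hN0 : (0:ℝ) ≤ N := by linarith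
      nlinarith
    nlinarith
  rw [hB]
  nlinarith [step1, step3, step4]

/-- Case `X ≥ 2/5`: nonnegativity of the dual (sine) kernel. -/
lemma sinKernel_nonneg (t X : ℝ) (ht0 : 0 ≤ t) (ht1 : t ≤ 1/2) (hX : 2/5 ≤ X) :
    0 ≤ HurwitzZeta.sinKernel ↑t X := by
  have hπ := Real.pi_gt_three
  have hπ' := Real.pi_lt_d2
  have hX0 : 0 < X := by linarith
  have hF := HurwitzZeta.hasSum_nat_sinKernel t hX0
  have hs : 0 ≤ Real.sin (2 * π * t) :=
    Real.sin_nonneg_of_nonneg_of_le_pi (by positivity) (by nlinarith)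
  set s := Real.sin (2 * π * t) with hs_def
  set u := Real.exp (-(3 * π * X)) with hu_def
  have hu0 : 0 < u := Real.exp_pos _
  have hu : u ≤ 1 / 20 := by
    rw [hu_def]
    have e1 : Real.exp (-(3 * π * X)) ≤ Real.exp (-3) := Real.exp_le_exp.2 (by nlinarith)
    have e2 : Real.exp (-3) * Real.exp 3 = 1 := by rw [← Real.exp_add]; norm_num
    nlinarith [aux_exp3, Real.exp_pos (-3), Real.exp_pos 3]
  set E : ℕ → ℝ := fun n => (n : ℝ) ^ 2 * Real.exp (-π * (n : ℝ) ^ 2 * X) with hE_def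
  have hEsum : Summable E := by
    have hnorm : ‖Real.exp (-π * X)‖ < 1 := by
      rw [Real.norm_eq_abs, abs_of_pos (Real.exp_pos _)]
      exact Real.exp_lt_one_iff.2 (by nlinarith)
    have hgeom : Summable (fun n : ℕ => (n:ℝ) ^ 2 * Real.exp (-π * X) ^ n) :=
      summable_pow_mul_geometric_of_norm_lt_one 2 hnorm
    refine Summable.of_nonneg_of_le (fun n => by positivity) (fun n => ?_) hgeom
    have h2 : (n:ℝ) ≤ (n:ℝ) ^ 2 := by exact_mod_cast Nat.le_self_pow (by norm_num) n
    have h1 : Real.exp (-π * (n:ℝ) ^ 2 * X) ≤ Real.exp (-π * X) ^ n := by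
      rw [← Real.exp_nat_mul]
      apply Real.exp_le_exp.2
      have h3 : (0:ℝ) ≤ ((n:ℝ) ^ 2 - (n:ℝ)) * (π * X) :=
        mul_nonneg (by linarith) (by positivity)
      nlinarith [h3]
    exact mul_le_mul_of_nonneg_left h1 (by positivity)
  have hgeosum : Summable (fun n : ℕ => (4 * u) ^ n) :=
    summable_geometric_of_lt_one (by positivity) (by nlinarith)
  have htail : ∑' n : ℕ, E (n + 1 + 1) ≤ Real.exp (-π * X) := by
    have hterm : ∀ n : ℕ, E (n + 1 + 1) ≤ (Real.exp (-π * X) * (16 * u)) * (4 * u) ^ n := by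
      intro n
      have c1 : Real.exp (-π * ((n : ℝ) + 2) ^ 2 * X)
          = Real.exp (-π * X) * Real.exp (-(π * (((n : ℝ) + 2) ^ 2 - 1) * X)) := by
        rw [← Real.exp_add]; congr 1; ring
      have c2 : Real.exp (-(π * (((n : ℝ) + 2) ^ 2 - 1) * X)) ≤ u ^ (n + 1) := by
        rw [hu_def, ← Real.exp_nat_mul]
        apply Real.exp_le_exp.2
        push_cast
        have h9 : (0:ℝ) ≤ ((n:ℝ) ^ 2 + (n:ℝ)) * (π * X) :=
          mul_nonneg (by positivity) (by positivity)
        nlinarith [h9]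
      have c3 : ((n : ℝ) + 2) ^ 2 ≤ 16 * 4 ^ n := by
        have h4 := aux_sq_le (n + 2)
        have h5 : (4:ℝ) ^ (n + 2) = 16 * 4 ^ n := by rw [pow_add]; ring
        push_cast at h4
        linarith [h4, h5.le, h5.ge]
      calc E (n + 1 + 1) = ((n : ℝ) + 2) ^ 2 * Real.exp (-π * ((n : ℝ) + 2) ^ 2 * X) := by
            simp only [hE_def]; push_cast; ring_nf
        _ ≤ (16 * 4 ^ n) * (Real.exp (-π * X) * u ^ (n + 1)) := by
            rw [c1]
            apply mul_le_mul c3 (mul_le_mul_of_nonneg_left c2 (Real.exp_pos _).le)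
              (by positivity) (by positivity)
        _ = (Real.exp (-π * X) * (16 * u)) * (4 * u) ^ n := by
            rw [mul_pow, pow_succ]; ring
    calc ∑' n : ℕ, E (n + 1 + 1) ≤ ∑' n : ℕ, (Real.exp (-π * X) * (16 * u)) * (4 * u) ^ n :=
          Summable.tsum_le_tsum hterm ((summable_nat_add_iff 1).2 ((summable_nat_add_iff 1).2 hEsum))
            (hgeosum.mul_left _)
      _ = (Real.exp (-π * X) * (16 * u)) * (1 - 4 * u)⁻¹ := by
          rw [tsum_mul_left, tsum_geometric_of_lt_one (by positivity) (by nlinarith)]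
      _ ≤ Real.exp (-π * X) := by
          have hd : (4/5:ℝ) ≤ 1 - 4 * u := by nlinarith
          have hinv : (1 - 4 * u)⁻¹ ≤ (4/5:ℝ)⁻¹ := by
            apply inv_anti₀ (by norm_num) hd
          have h6 : (0:ℝ) ≤ Real.exp (-π * X) * (16 * u) := by positivity
          have h7 : (Real.exp (-π * X) * (16 * u)) * (1 - 4 * u)⁻¹
              ≤ (Real.exp (-π * X) * (16 * u)) * (4/5:ℝ)⁻¹ :=
            mul_le_mul_of_nonneg_left hinv h6
          have h8 : (Real.exp (-π * X) * (16 * u)) * (4/5:ℝ)⁻¹ = 20 * u * Real.exp (-π * X) := by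
            ring
          nlinarith [Real.exp_pos (-π * X)]
  have hEbound : ∑' n : ℕ, E n ≤ 2 * Real.exp (-π * X) := by
    rw [Summable.tsum_eq_zero_add hEsum, Summable.tsum_eq_zero_add ((summable_nat_add_iff 1).2 hEsum)]
    have h0 : E 0 = 0 := by simp [hE_def]
    have h1 : E (0 + 1) = Real.exp (-π * X) := by
      simp only [hE_def]; norm_num
    rw [h0, h1]
    linarith [htail]
  set G : ℕ → ℝ := fun n =>
    (if n = 1 then 4 * s * Real.exp (-π * X) else 0) - 2 * s * E n with hG_def
  have hGsum : Summable G := (hasSum_ite_eq 1 (4 * s * Real.exp (-π * X))).summable.sub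
    (hEsum.mul_left _)
  have hGle : ∀ n : ℕ,
      G n ≤ 2 * (n:ℝ) * Real.sin (2 * π * t * (n:ℝ)) * Real.exp (-π * (n:ℝ) ^ 2 * X) := by
    intro n
    by_cases hn : n = 1
    · subst hn
      simp only [hG_def, hE_def]
      norm_num
      rw [← hs_def]
      linarith
    · have hsin : -((n:ℝ) * s) ≤ Real.sin (2 * π * t * (n:ℝ)) := by
        have h9 := aux_sin (2 * π * t) (by positivity) (by nlinarith) n
        have harg : (n:ℝ) * (2 * π * t) = 2 * π * t * (n:ℝ) := by ring
        rw [harg] at h9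
        have := abs_le.1 h9
        rw [← hs_def] at this
        linarith [this.1]
      simp only [hG_def, hE_def, if_neg hn]
      have he0 : (0:ℝ) ≤ Real.exp (-π * (n:ℝ) ^ 2 * X) := (Real.exp_pos _).le
      have hn0 : (0:ℝ) ≤ (n:ℝ) := Nat.cast_nonneg n
      have h10 := mul_le_mul_of_nonneg_right hsin
        (mul_nonneg (mul_nonneg (by norm_num : (0:ℝ) ≤ 2) hn0) he0)
      nlinarith [h10]
  have hGtsum : ∑' n, G n = 4 * s * Real.exp (-π * X) - 2 * s * ∑' n, E n := by
    simp only [hG_def]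
    rw [Summable.tsum_sub (hasSum_ite_eq 1 (4 * s * Real.exp (-π * X))).summable
      (hEsum.mul_left _), tsum_ite_eq, tsum_mul_left]
  have final : 0 ≤ ∑' n, G n := by
    rw [hGtsum]
    have h11 : 2 * s * ∑' n, E n ≤ 2 * s * (2 * Real.exp (-π * X)) :=
      mul_le_mul_of_nonneg_left hEbound (by positivity)
    nlinarith [h11]
  calc (0:ℝ) ≤ ∑' n, G n := final
    _ ≤ HurwitzZeta.sinKernel ↑t X := by
        rw [← hF.tsum_eq]
        exact Summable.tsum_le_tsum hGle hGsum hF.summable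

/-- Case `πtx ≥ 1`: every pair `n, -(n+1)` contributes nonnegatively. -/
lemma case_i (t x : ℝ) (hx : 0 < x) (ht1 : t ≤ 1/2) (h1 : 1 ≤ π * t * x) :
    0 ≤ HurwitzZeta.oddKernel ↑t x := by
  have hπ := Real.pi_gt_three
  have ht0 : 0 < t := by
    by_contra hcon
    push_neg at hcon
    have hp : (0:ℝ) < π * x := mul_pos Real.pi_pos hx
    nlinarith [mul_nonneg (neg_nonneg.2 hcon) hp.le]
  have hO := (HurwitzZeta.hasSum_int_oddKernel t hx).nat_add_neg_add_one
  refine hasSum_le (fun n => ?_) hasSum_zero hO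
  have e2 : ((-((n : ℤ) + 1) : ℤ) : ℝ) = -((n:ℝ) + 1) := by push_cast; ring
  have e1 : (((n : ℤ)) : ℝ) = (n : ℝ) := by push_cast; ring
  rw [e2, e1]
  have e3 : (-((n:ℝ) + 1) + t) = -((n:ℝ) + 1 - t) := by ring
  rw [e3, neg_sq]
  have hn0 : (0:ℝ) ≤ (n:ℝ) := Nat.cast_nonneg n
  have key := gauss_pair ((n:ℝ) + t) ((n:ℝ) + 1 - t) x
    (by linarith) (by linarith) hx ?_
  · nlinarith [key]
  · have h2nt : (0:ℝ) ≤ 2 * (n:ℝ) + 2 * t + 1 := by linarith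
    have hslack : (0:ℝ) ≤ π * x * ((n:ℝ) * (2 * (n:ℝ) + 2 * t + 1)) := by
      have hp : (0:ℝ) ≤ π * x := by positivity
      exact mul_nonneg hp (mul_nonneg hn0 h2nt)
    nlinarith [hslack, h1]

/-- Case `x ≥ 5/2`, `πtx ≤ 1`: pair `n` with `-n`; the `n = 0` term dominates. -/
lemma case_iii (t x : ℝ) (hx : 5/2 ≤ x) (ht0 : 0 ≤ t) (h1 : π * t * x ≤ 1) :
    0 ≤ HurwitzZeta.oddKernel ↑t x := by
  have hπ := Real.pi_gt_three
  have hx0 : 0 < x := by linarith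
  have hπx : 15/2 ≤ π * x := by nlinarith
  have ht7 : t ≤ 1/7 := by nlinarith
  set w := Real.exp (2 - π * x) with hw_def
  have hw0 : 0 < w := Real.exp_pos _
  have hw : 20 * (π * x) * w ≤ 1 := by
    have hxe := aux_xexp x hx
    have hbig := aux_exp_big
    have hw_eq : w = Real.exp 2 * Real.exp (-(π * x)) := by
      rw [hw_def, ← Real.exp_add]; ring_nf
    have hprod : Real.exp (5 * π / 2 - 2) * (Real.exp 2 * Real.exp (-(5 * π / 2))) = 1 := by
      rw [← Real.exp_add, ← Real.exp_add, ← Real.exp_zero]; congr 1; ring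
    calc 20 * (π * x) * w = 20 * π * Real.exp 2 * (x * Real.exp (-(π * x))) := by
          rw [hw_eq]; ring
      _ ≤ 20 * π * Real.exp 2 * (5/2 * Real.exp (-(5 * π / 2))) := by
          apply mul_le_mul_of_nonneg_left hxe (by positivity)
      _ = 50 * π * (Real.exp 2 * Real.exp (-(5 * π / 2))) := by ring
      _ ≤ Real.exp (5 * π / 2 - 2) * (Real.exp 2 * Real.exp (-(5 * π / 2))) := by
          apply mul_le_mul_of_nonneg_right hbig (by positivity)
      _ = 1 := hprod
  have hw20 : 20 * w ≤ 1 := by nlinarith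
  have h4w : 4 * w ≤ 1/5 := by linarith
  have hO := HurwitzZeta.hasSum_int_oddKernel t hx0
  have hP := hO.nat_add_neg
  set E : ℕ → ℝ := fun n => (n : ℝ) ^ 2 * Real.exp (-π * ((n : ℝ) - t) ^ 2 * x) with hE_def
  have hEle : ∀ n : ℕ, 1 ≤ n → E n ≤ Real.exp (-π * t ^ 2 * x) * (4 * w) ^ n := by
    intro n hn
    have hn1 : (1:ℝ) ≤ (n:ℝ) := by exact_mod_cast hn
    have c1 : Real.exp (-π * ((n:ℝ) - t) ^ 2 * x)
        = Real.exp (-π * t ^ 2 * x) * Real.exp (-(π * ((n:ℝ) ^ 2 - 2 * (n:ℝ) * t) * x)) := by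
      rw [← Real.exp_add]; congr 1; ring
    have c2 : Real.exp (-(π * ((n:ℝ) ^ 2 - 2 * (n:ℝ) * t) * x)) ≤ w ^ n := by
      rw [hw_def, ← Real.exp_nat_mul]
      apply Real.exp_le_exp.2
      have f1 : π * (n:ℝ) * x ≤ π * (n:ℝ) ^ 2 * x := by
        have hq : (0:ℝ) ≤ ((n:ℝ) ^ 2 - (n:ℝ)) * (π * x) := by
          apply mul_nonneg (by nlinarith) (by positivity)
        nlinarith
      have f2 : 2 * π * (n:ℝ) * t * x ≤ 2 * (n:ℝ) := by
        have := mul_le_mul_of_nonneg_left h1 (by linarith : (0:ℝ) ≤ 2 * (n:ℝ))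
        nlinarith
      nlinarith [f1, f2]
    have c3 := aux_sq_le n
    calc E n = (n:ℝ) ^ 2 *
          (Real.exp (-π * t ^ 2 * x) * Real.exp (-(π * ((n:ℝ) ^ 2 - 2 * (n:ℝ) * t) * x))) := by
          simp only [hE_def]
          rw [c1]
      _ ≤ 4 ^ n * (Real.exp (-π * t ^ 2 * x) * w ^ n) := by
          apply mul_le_mul c3 (mul_le_mul_of_nonneg_left c2 (Real.exp_pos _).le)
            (by positivity) (by positivity)
      _ = Real.exp (-π * t ^ 2 * x) * (4 * w) ^ n := by rw [mul_pow]; ring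
  have hgeo : Summable (fun n : ℕ => (4 * w) ^ n) :=
    summable_geometric_of_lt_one (by positivity) (by linarith)
  have hEsum : Summable E := by
    refine Summable.of_nonneg_of_le (fun n => by positivity) (fun n => ?_)
      (hgeo.mul_left (Real.exp (-π * t ^ 2 * x)))
    rcases Nat.eq_zero_or_pos n with h | h
    · subst h
      simp only [hE_def, Nat.cast_zero, ne_eq, OfNat.ofNat_ne_zero, not_false_eq_true,
        zero_pow, zero_mul]
      positivity
    · exact hEle n h
  have hEtsum : ∑' n, E n ≤ Real.exp (-π * t ^ 2 * x) * (4 * w) * (1 - 4 * w)⁻¹ := by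
    rw [Summable.tsum_eq_zero_add hEsum]
    have h0 : E 0 = 0 := by simp [hE_def]
    rw [h0, zero_add]
    calc ∑' n : ℕ, E (n + 1)
        ≤ ∑' n : ℕ, (Real.exp (-π * t ^ 2 * x) * (4 * w)) * (4 * w) ^ n := by
          refine Summable.tsum_le_tsum (fun n => ?_) ((summable_nat_add_iff 1).2 hEsum) (hgeo.mul_left _)
          calc E (n + 1) ≤ Real.exp (-π * t ^ 2 * x) * (4 * w) ^ (n + 1) :=
                hEle (n + 1) (by omega)
            _ = (Real.exp (-π * t ^ 2 * x) * (4 * w)) * (4 * w) ^ n := by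
                rw [pow_succ]; ring
      _ = Real.exp (-π * t ^ 2 * x) * (4 * w) * (1 - 4 * w)⁻¹ := by
          rw [tsum_mul_left, tsum_geometric_of_lt_one (by positivity) (by linarith)]
  set c0 : ℝ := t * Real.exp (-π * t ^ 2 * x) with hc0
  have hc00 : 0 ≤ c0 := by
    rw [hc0]; exact mul_nonneg ht0 (Real.exp_pos _).le
  set d : ℕ → ℝ := fun n => (if n = 0 then 2 * c0 else 0) - 4 * π * t * x * E n with hd_def
  have hdsum : Summable d := (hasSum_ite_eq 0 (2 * c0)).summable.sub (hEsum.mul_left _)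
  have hdtsum : ∑' n, d n = 2 * c0 - 4 * π * t * x * ∑' n, E n := by
    simp only [hd_def]
    rw [Summable.tsum_sub (hasSum_ite_eq 0 (2 * c0)).summable (hEsum.mul_left _),
      tsum_ite_eq, tsum_mul_left]
  have h4πtx : (0:ℝ) ≤ 4 * π * t * x := by
    have : (0:ℝ) ≤ π := by linarith
    nlinarith
  have hdge : c0 ≤ ∑' n, d n := by
    rw [hdtsum]
    have s1 : 4 * π * t * x * ∑' n, E n
        ≤ 4 * π * t * x * (Real.exp (-π * t ^ 2 * x) * (4 * w) * (1 - 4 * w)⁻¹) :=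
      mul_le_mul_of_nonneg_left hEtsum h4πtx
    have hd45 : (4/5:ℝ) ≤ 1 - 4 * w := by linarith
    have hinv : (1 - 4 * w)⁻¹ ≤ (4/5:ℝ)⁻¹ := inv_anti₀ (by norm_num) hd45
    have s2 : 4 * π * t * x * (Real.exp (-π * t ^ 2 * x) * (4 * w) * (1 - 4 * w)⁻¹)
        ≤ 4 * π * t * x * (Real.exp (-π * t ^ 2 * x) * (4 * w) * (4/5:ℝ)⁻¹) := by
      apply mul_le_mul_of_nonneg_left _ h4πtx
      apply mul_le_mul_of_nonneg_left hinv (by positivity)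
    have s3 : 4 * π * t * x * (Real.exp (-π * t ^ 2 * x) * (4 * w) * (4/5:ℝ)⁻¹)
        = (20 * (π * x) * w) * c0 := by
      rw [hc0]; ring
    have s4 : (20 * (π * x) * w) * c0 ≤ 1 * c0 := mul_le_mul_of_nonneg_right hw hc00
    linarith
  have hdle : ∀ n : ℕ, d n ≤ (((n:ℤ):ℝ) + t) * Real.exp (-π * (((n:ℤ):ℝ) + t) ^ 2 * x)
      + (((-(n:ℤ) : ℤ):ℝ) + t) * Real.exp (-π * (((-(n:ℤ) : ℤ):ℝ) + t) ^ 2 * x) := by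
    intro n
    rcases Nat.eq_zero_or_pos n with h | h
    · subst h
      simp only [hd_def, hE_def, hc0]
      norm_num
      ring_nf
      try linarith
    · have hn1 : (1:ℝ) ≤ (n:ℝ) := by exact_mod_cast h
      have hcast1 : (((n:ℤ)):ℝ) = (n:ℝ) := by push_cast; ring
      have hcast2 : (((-(n:ℤ) : ℤ)):ℝ) = -(n:ℝ) := by push_cast; ring
      simp only [hd_def, hE_def, if_neg (by omega : n ≠ 0)]
      rw [hcast1, hcast2]
      have e3 : (-(n:ℝ) + t) = -((n:ℝ) - t) := by ring
      rw [e3, neg_sq]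
      have key := pair_bound (n:ℝ) t x hn1 ht0 (by linarith) hx0
      nlinarith [key]
  have hle := Summable.tsum_le_tsum hdle hdsum hP.summable
  rw [hP.tsum_eq] at hle
  have hf0 : ((((0:ℤ)):ℝ) + t) * Real.exp (-π * ((((0:ℤ)):ℝ) + t) ^ 2 * x) = c0 := by
    rw [hc0]; norm_num
  rw [hf0] at hle
  linarith [hdge, hle]

theorem sum_nonneg_of_mem_right_half
    (X Y : ℝ) (hX : 0 < X) (k : ℤ) (h1 : (k : ℝ) - 1/2 ≤ Y) (h2 : Y ≤ (k : ℝ)) :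
    0 ≤ (∑' n : ℤ, ((n : ℝ) - Y) * Real.exp (-Real.pi * ((n : ℝ) - Y)^2 / X)) := by
  have hπ := Real.pi_gt_three
  set t : ℝ := (k : ℝ) - Y with ht_def
  have ht0 : 0 ≤ t := by rw [ht_def]; linarith
  have ht1 : t ≤ 1/2 := by rw [ht_def]; linarith
  have hx0 : 0 < 1 / X := by positivity
  have hsum : HasSum (fun n : ℤ => ((n : ℝ) - Y) * Real.exp (-π * ((n : ℝ) - Y)^2 / X))
      (HurwitzZeta.oddKernel ↑(-Y) (1 / X)) := by
    have h := HurwitzZeta.hasSum_int_oddKernel (-Y) hx0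
    have hfun : (fun n : ℤ => ((n : ℝ) + (-Y)) * Real.exp (-π * ((n : ℝ) + (-Y)) ^ 2 * (1 / X)))
        = fun n : ℤ => ((n : ℝ) - Y) * Real.exp (-π * ((n : ℝ) - Y)^2 / X) := by
      funext n
      have e1 : (n:ℝ) + -Y = (n:ℝ) - Y := by ring
      rw [e1, mul_one_div]
    rw [← hfun]
    exact h
  rw [hsum.tsum_eq]
  have hcoe : ((-Y : ℝ) : UnitAddCircle) = ((t : ℝ) : UnitAddCircle) := by
    show QuotientAddGroup.mk (-Y) = QuotientAddGroup.mk t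
    rw [QuotientAddGroup.eq]
    refine AddSubgroup.mem_zmultiples_iff.2 ⟨k, ?_⟩
    rw [ht_def]
    push_cast
    rw [zsmul_eq_mul, mul_one]
    ring
  rw [hcoe]
  rcases le_or_gt (2/5 : ℝ) X with hX2 | hX2
  · rw [HurwitzZeta.oddKernel_functional_equation, one_div_one_div]
    have hker := sinKernel_nonneg t X ht0 ht1 hX2
    apply mul_nonneg _ hker
    positivity
  · have hx5 : 5/2 ≤ 1 / X := by
      rw [le_one_div (by norm_num) hX]
      linarith
    rcases le_or_gt 1 (π * t * (1 / X)) with hc | hc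
    · exact case_i t (1 / X) hx0 ht1 hc
    · exact case_iii t (1 / X) hx5 ht0 hc.le
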